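/- arXiv:2005.04759 — 3 statements merged into one kernel-verified Lean document; each statement's English description precedes it below -/
import Mathlib

section
/- If c = (c_1,...,c_n) is a parking sequence for (y; z), then the order statistics c_{(1)} ≤ ... ≤ c_{(n)} of c satisfy c_{(1)} ≤ z and, for each 2 ≤ j ≤ n, c_{(j)} ≤ z + y_{(n)} + y_{(n-1)} + ... + y_{(n-j+2)} (i.e., z plus the sum of the j-1 largest car lengths). -/
open Finset

/-- The first empty spot `j` with `c ≤ j ≤ M` (street spots are `1..M`). -/
def firstEmpty (occ : Finset ℕ) (M c : ℕ) : Option ℕ :=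
  (List.range' c (M + 1 - c)).find? (fun j => decide (j ∉ occ))

/-- Park cars with preferences `cs` and lengths `ys` on a street with spots `1..M`,
where `occ` is the set of already-occupied spots.  Returns the list of starting
spots of the cars (in order of entry) if all cars can park. -/
def parkAux (M : ℕ) : Finset ℕ → List ℕ → List ℕ → Option (List ℕ)
  | _, [], [] => some []
  | occ, c :: cs, y :: ys =>
    match firstEmpty occ M c with
    | none => none
    | some j =>
      if (∀ i ∈ Finset.Ico j (j + y), i ∉ occ) ∧ j + y - 1 ≤ M then
        (parkAux M (occ ∪ Finset.Ico j (j + y)) cs ys).map (j :: ·)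
      else none
  | _, _, _ => none

/-- Outcome of the parking process for length vector `ys`, preference sequence `cs`,
and trailer parameter `z` (the trailer occupies spots `1,…,z-1`); the street has
`z - 1 + ys.sum` spots. -/
def parkResult (ys cs : List ℕ) (z : ℕ) : Option (List ℕ) :=
  parkAux (z - 1 + ys.sum) (Finset.Ico 1 z) cs ys

/-- `cs` is a parking sequence for `(ys; z)`. -/
def IsParkingSeq (ys cs : List ℕ) (z : ℕ) : Prop :=
  cs.length = ys.length ∧ (∀ c ∈ cs, 1 ≤ c) ∧ (parkResult ys cs z).isSome = true

/-- Starting spots of the standard (no-gap, in order) final configuration. -/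
def standardStarts (z : ℕ) : List ℕ → List ℕ
  | [] => []
  | y :: ys => z :: standardStarts (z + y) ys

/-- `cs` parks `ys` in the standard order `T, C₁, …, Cₙ`. -/
def ParksStandard (ys cs : List ℕ) (z : ℕ) : Prop :=
  parkResult ys cs z = some (standardStarts z ys)

/-- `cs` is a permutation-invariant parking sequence for `(ys; z)`. -/
def PermInvariant (ys cs : List ℕ) (z : ℕ) : Prop :=
  ∀ cs' : List ℕ, cs'.Perm cs → IsParkingSeq ys cs' z

/-- `cs` is a strong parking sequence for `{ys; z}`. -/
def StrongParkingSeq (ys cs : List ℕ) (z : ℕ) : Prop :=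
  ∀ ys' : List ℕ, ys'.Perm ys → IsParkingSeq ys' cs z

/-- The nondecreasing rearrangement (order statistics) of a list. -/
def orderStats (l : List ℕ) : List ℕ :=
  Multiset.sort (l : Multiset ℕ) (· ≤ ·)

/-- `xs` is a `u`-parking function. -/
def IsUPF (u xs : List ℕ) : Prop :=
  xs.length = u.length ∧ (∀ x ∈ xs, 1 ≤ x) ∧
    ∀ i < u.length, (orderStats xs).getD i 0 ≤ u.getD i 0

def covers : List (ℕ × ℕ) → Finset ℕ
  | [] => ∅
  | p :: ps => Finset.Ico p.1 (p.1 + p.2) ∪ covers ps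

lemma mem_covers {x : ℕ} : ∀ {ps : List (ℕ × ℕ)},
    x ∈ covers ps ↔ ∃ p ∈ ps, p.1 ≤ x ∧ x < p.1 + p.2
  | [] => by simp [covers]
  | p :: ps => by
    simp [covers, mem_covers (ps := ps), Finset.mem_union, Finset.mem_Ico, or_and_right]
    constructor
    · rintro (h | ⟨a, b, h⟩)
      · exact ⟨p.1, p.2, Or.inl ⟨rfl, h⟩⟩
      · exact ⟨a, b, Or.inr h⟩
    · rintro ⟨a, b, ⟨h, h2⟩ | h⟩
      · subst h; exact Or.inl h2
      · exact Or.inr ⟨a, b, h⟩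

lemma card_covers : ∀ (ps : List (ℕ × ℕ)), (covers ps).card ≤ (ps.map Prod.snd).sum
  | [] => by simp [covers]
  | p :: ps => by
    simp only [covers, List.map_cons, List.sum_cons]
    calc (Finset.Ico p.1 (p.1 + p.2) ∪ covers ps).card
        ≤ (Finset.Ico p.1 (p.1 + p.2)).card + (covers ps).card := Finset.card_union_le _ _
      _ ≤ p.2 + (ps.map Prod.snd).sum := by
          simp [Nat.card_Ico]; exact card_covers ps

lemma firstEmpty_spec {occ : Finset ℕ} {M c j : ℕ} (h : firstEmpty occ M c = some j) :
    c ≤ j ∧ j ∉ occ := by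
  have h1 := List.find?_some h
  have h2 := List.mem_of_find?_eq_some h
  simp [List.mem_range'] at h2
  simp at h1
  exact ⟨by omega, h1⟩

lemma parkAux_spec (M : ℕ) : ∀ (cs ys : List ℕ) (occ : Finset ℕ) (starts : List ℕ),
    parkAux M occ cs ys = some starts →
    starts.length = cs.length ∧ ys.length = cs.length ∧
    (∀ t ∈ cs.zip (starts.zip ys), t.1 ≤ t.2.1 ∧ t.2.1 + t.2.2 - 1 ≤ M) ∧
    (occ ∪ covers (starts.zip ys)).card = occ.card + ys.sum
  | [], [], occ, starts => by
    intro h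
    simp [parkAux] at h
    subst h
    simp [covers]
  | [], y :: ys, occ, starts => by intro h; simp [parkAux] at h
  | c :: cs, [], occ, starts => by intro h; simp [parkAux] at h
  | c :: cs, y :: ys, occ, starts => by
    intro h
    unfold parkAux at h
    cases hfe : firstEmpty occ M c with
    | none => rw [hfe] at h; simp at h
    | some j =>
      rw [hfe] at h
      dsimp only at h
      by_cases hc : (∀ i ∈ Finset.Ico j (j + y), i ∉ occ) ∧ j + y - 1 ≤ M
      · rw [if_pos hc] at h
        obtain ⟨rest, hrest, hst⟩ := Option.map_eq_some_iff.mp h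
        subst hst
        obtain ⟨hl1, hl2, hzip, hcard⟩ := parkAux_spec M cs ys _ rest hrest
        have hcj := firstEmpty_spec hfe
        refine ⟨by simpa using hl1, by simpa using hl2, ?_, ?_⟩
        · intro t ht
          rw [List.zip_cons_cons, List.zip_cons_cons] at ht
          rcases List.mem_cons.mp ht with h' | h'
          · subst h'; exact ⟨hcj.1, hc.2⟩
          · exact hzip t h'
        · rw [List.zip_cons_cons]
          have hdisj : Disjoint occ (Finset.Ico j (j + y)) := by
            rw [Finset.disjoint_right]
            intro a ha
            exact hc.1 a ha
          have : occ ∪ covers ((j, y) :: rest.zip ys)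
              = (occ ∪ Finset.Ico j (j + y)) ∪ covers (rest.zip ys) := by
            simp only [covers]
            ac_rfl
          rw [this, hcard, Finset.card_union_of_disjoint hdisj, Nat.card_Ico]
          simp [List.sum_cons]
          omega
      · rw [if_neg hc] at h; simp at h

lemma take_sum_le {l : List ℕ} {b : ℕ} (hb : ∀ x ∈ l, x ≤ b) (k : ℕ) :
    (l.take (k + 1)).sum ≤ (l.take k).sum + b := by
  rw [List.take_succ]
  cases h : l[k]? with
  | none => simp
  | some e =>
    have : e ∈ l := by
      obtain ⟨hlt, rfl⟩ := List.getElem?_eq_some_iff.mp h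
      exact List.getElem_mem hlt
    simp [hb e this]

lemma sum_le_take_sorted : ∀ (l : List ℕ), l.Pairwise (· ≥ ·) →
    ∀ (s : Multiset ℕ), s ≤ ↑l → ∀ k, Multiset.card s ≤ k → s.sum ≤ (l.take k).sum
  | [], _, s, hs, k, _ => by
    have : s = 0 := by simpa using Multiset.le_zero.mp (by simpa using hs)
    simp [this]
  | b :: l, hsort, s, hs, k, hk => by
    have hsort' : l.Pairwise (· ≥ ·) := hsort.of_cons
    by_cases hb : b ∈ s
    · obtain ⟨s', rfl⟩ : ∃ s', s = b ::ₘ s' := ⟨s.erase b, (Multiset.cons_erase hb).symm⟩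
      have hs' : s' ≤ ↑l := by
        have := Multiset.erase_le_erase b hs
        simpa using this
      have hk' : Multiset.card s' ≤ k - 1 := by
        simp at hk; omega
      obtain ⟨k', rfl⟩ : ∃ k', k = k' + 1 := by
        refine ⟨k - 1, ?_⟩
        simp at hk; omega
      have := sum_le_take_sorted l hsort' s' hs' k' (by simpa using hk')
      simp only [List.take_succ_cons, List.sum_cons, Multiset.sum_cons]
      omega
    · have hs' : s ≤ ↑l := by
        rw [Multiset.le_iff_count] at hs ⊢
        intro a
        have := hs a
        rcases eq_or_ne a b with rfl | hne
        · simp [Multiset.count_eq_zero_of_notMem hb]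
        · simpa [Multiset.count_cons, List.count_cons, hne.symm] using this
      have h1 := sum_le_take_sorted l hsort' s hs' k hk
      have h2 : (l.take k).sum ≤ ((b :: l).take k).sum := by
        cases k with
        | zero => simp
        | succ m =>
          have hb' : ∀ x ∈ l, x ≤ b := fun x hx => List.rel_of_pairwise_cons hsort hx
          calc (l.take (m+1)).sum ≤ (l.take m).sum + b := take_sum_le hb' m
            _ = ((b :: l).take (m+1)).sum := by simp [List.take_succ_cons]; omega
      exact le_trans h1 h2

lemma countP_le_of_sorted {l : List ℕ} (hs : l.Pairwise (· ≤ ·)) {i K : ℕ}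
    (hi : i < l.length) (hK : K < l.getD i 0) :
    l.countP (fun x => decide (x ≤ K)) ≤ i := by
  have hdrop : ∀ x ∈ l.drop i, K < x := by
    intro x hx
    obtain ⟨m, hm, rfl⟩ := List.getElem_of_mem hx
    have him : i + m < l.length := by have := (List.length_drop (i := i) (l := l)) ▸ hm; omega
    rw [List.getElem_drop]
    have : l[i] ≤ l[i + m] := by
      have := hs.rel_get_of_le (a := ⟨i, hi⟩) (b := ⟨i + m, him⟩)
        (by simp)
      simpa using this
    have hgd : l.getD i 0 = l[i] := List.getD_eq_getElem l 0 hi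
    omega
  calc l.countP (fun x => decide (x ≤ K))
      = (l.take i).countP _ + (l.drop i).countP (fun x => decide (x ≤ K)) := by
        rw [← List.countP_append, List.take_append_drop]
    _ ≤ i + 0 := by
        refine Nat.add_le_add ?_ ?_
        · exact le_trans List.countP_le_length (by simp)
        · refine Nat.le_of_eq (List.countP_eq_zero.mpr ?_)
          intro x hx
          simpa using Nat.not_le.mpr (hdrop x hx)
    _ ≤ i := by omega

lemma length_le_sum {l : List ℕ} (h : ∀ y ∈ l, 0 < y) : l.length ≤ l.sum := by
  induction l with
  | nil => simp
  | cons a l ih =>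
    simp only [List.length_cons, List.sum_cons]
    have := h a (by simp)
    have := ih (fun y hy => h y (by simp [hy]))
    omega

theorem stmt1 (n z : ℕ) (hn : 0 < n) (hz : 0 < z) (ys cs : List ℕ)
    (hylen : ys.length = n) (hypos : ∀ y ∈ ys, 0 < y)
    (hps : IsParkingSeq ys cs z) :
    (orderStats cs).getD 0 0 ≤ z ∧
    ∀ j, 2 ≤ j → j ≤ n →
      (orderStats cs).getD (j - 1) 0 ≤ z + ((orderStats ys).drop (n - (j - 1))).sum := by
  obtain ⟨hlen, hcpos, hsome⟩ := hps
  set M := z - 1 + ys.sum with hM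
  obtain ⟨starts, hpark⟩ := Option.isSome_iff_exists.mp hsome
  rw [parkResult] at hpark
  obtain ⟨hl1, hl2, hzip, hcard⟩ := parkAux_spec M cs ys _ starts hpark
  -- basic lengths
  have hcslen : cs.length = n := by omega
  have hstlen : starts.length = n := by omega
  have hzylen : (starts.zip ys).length = n := by
    rw [List.length_zip]; omega
  -- orderStats facts
  have hso : (orderStats ys).Pairwise (· ≤ ·) := Multiset.pairwise_sort (s := _) (r := _)
  have hco : ↑(orderStats ys) = (↑ys : Multiset ℕ) := Multiset.sort_eq (s := _) (r := _)
  have hoslen : (orderStats ys).length = n := by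
    rw [orderStats, Multiset.length_sort]; simpa using hylen
  have hcso : (orderStats cs).Pairwise (· ≤ ·) := Multiset.pairwise_sort (s := _) (r := _)
  have hcco : ↑(orderStats cs) = (↑cs : Multiset ℕ) := Multiset.sort_eq (s := _) (r := _)
  have hcoslen : (orderStats cs).length = n := by
    rw [orderStats, Multiset.length_sort]; simpa using hcslen
  -- the street is fully occupied
  have hsub : Finset.Ico 1 z ∪ covers (starts.zip ys) ⊆ Finset.Icc 1 M := by
    intro x hx
    rcases Finset.mem_union.mp hx with hx | hx
    · rw [Finset.mem_Ico] at hx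
      rw [Finset.mem_Icc]
      have hsum : n ≤ ys.sum := hylen ▸ length_le_sum hypos
      constructor
      · omega
      · omega
    · obtain ⟨p, hp, hpx⟩ := mem_covers.mp hx
      obtain ⟨i, hi, rfl⟩ := List.getElem_of_mem hp
      have hi' : i < n := by omega
      have ht : (cs[i]'(by omega), (starts.zip ys)[i]) ∈ cs.zip (starts.zip ys) := by
        have hilen : i < (cs.zip (starts.zip ys)).length := by
          rw [List.length_zip]; omega
        have := List.getElem_zip (l := cs) (l' := starts.zip ys) (i := i) (h := hilen)
        rw [← this]
        exact List.getElem_mem hilen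
      have hts := hzip _ ht
      dsimp only at hts
      have hc1 : 1 ≤ cs[i]'(by omega) := hcpos _ (List.getElem_mem (by omega))
      rw [Finset.mem_Icc]
      constructor
      · omega
      · omega
  have hfull : Finset.Ico 1 z ∪ covers (starts.zip ys) = Finset.Icc 1 M := by
    apply Finset.eq_of_subset_of_card_le hsub
    rw [hcard, Nat.card_Icc, Nat.card_Ico]
    omega
  -- main counting inequality
  have main : ∀ K, 0 < K → K ≤ M →
      K ≤ (z - 1) +
        (((cs.zip (starts.zip ys)).filter (fun t => decide (t.1 ≤ K))).map
          (fun t => t.2.2)).sum := by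
    intro K hK0 hKM
    set P := cs.zip (starts.zip ys) with hP
    set Pg := P.filter (fun t => decide (t.1 ≤ K)) with hPg
    have hcov : Finset.Icc 1 K ⊆ Finset.Ico 1 z ∪ covers (Pg.map Prod.snd) := by
      intro x hx
      rw [Finset.mem_Icc] at hx
      have hxU : x ∈ Finset.Ico 1 z ∪ covers (starts.zip ys) := by
        rw [hfull, Finset.mem_Icc]; omega
      rcases Finset.mem_union.mp hxU with hx' | hx'
      · exact Finset.mem_union_left _ hx'
      · obtain ⟨p, hp, hpx⟩ := mem_covers.mp hx'
        obtain ⟨i, hi, rfl⟩ := List.getElem_of_mem hp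
        have hilen : i < P.length := by rw [hP, List.length_zip]; omega
        have hmemP : (cs[i]'(by omega), (starts.zip ys)[i]) ∈ P := by
          have := List.getElem_zip (l := cs) (l' := starts.zip ys) (i := i) (h := hilen)
          rw [← this]
          exact List.getElem_mem hilen
        have hts := hzip _ hmemP
        dsimp only at hts
        have hcK : cs[i]'(by omega) ≤ K := by
          have : cs[i]'(by omega) ≤ (starts.zip ys)[i].1 := hts.1
          omega
        have hmemPg : (cs[i]'(by omega), (starts.zip ys)[i]) ∈ Pg := by
          rw [hPg, List.mem_filter]
          exact ⟨hmemP, by simpa using hcK⟩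
        refine Finset.mem_union_right _ (mem_covers.mpr ?_)
        exact ⟨(starts.zip ys)[i], List.mem_map_of_mem hmemPg, hpx⟩
    calc K = (Finset.Icc 1 K).card := by rw [Nat.card_Icc]; omega
      _ ≤ (Finset.Ico 1 z ∪ covers (Pg.map Prod.snd)).card := Finset.card_le_card hcov
      _ ≤ (Finset.Ico 1 z).card + (covers (Pg.map Prod.snd)).card := Finset.card_union_le _ _
      _ ≤ (z - 1) + ((Pg.map Prod.snd).map Prod.snd).sum := by
          rw [Nat.card_Ico]
          exact Nat.add_le_add le_rfl (card_covers _)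
      _ = (z - 1) + (Pg.map (fun t => t.2.2)).sum := by rw [List.map_map]; rfl
  -- bounding the filtered sum by the k largest
  have hrev : ((orderStats ys).reverse).Pairwise (· ≥ ·) := by
    rw [List.pairwise_reverse]
    exact hso
  have bound : ∀ K k, cs.countP (fun c => decide (c ≤ K)) ≤ k →
      (((cs.zip (starts.zip ys)).filter (fun t => decide (t.1 ≤ K))).map
          (fun t => t.2.2)).sum ≤ ((orderStats ys).reverse.take k).sum := by
    intro K k hcount
    set P := cs.zip (starts.zip ys) with hP
    set Pg := P.filter (fun t => decide (t.1 ≤ K)) with hPg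
    set L := Pg.map (fun t => t.2.2) with hL
    have hPys : P.map (fun t => t.2.2) = ys := by
      have h1 : P.map Prod.snd = starts.zip ys :=
        List.map_snd_zip (by omega)
      have h2 : (starts.zip ys).map Prod.snd = ys :=
        List.map_snd_zip (by omega)
      calc P.map (fun t => t.2.2) = (P.map Prod.snd).map Prod.snd := by
            rw [List.map_map]; rfl
        _ = ys := by rw [h1, h2]
    have hsubl : L.Sublist ys := by
      rw [← hPys]
      exact List.Sublist.map _ (List.filter_sublist)
    have hmle : (↑L : Multiset ℕ) ≤ ↑((orderStats ys).reverse) := by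
      have : (↑((orderStats ys).reverse) : Multiset ℕ) = ↑ys := by
        rw [Multiset.coe_eq_coe.mpr (List.reverse_perm _)]
        exact hco
      rw [this, Multiset.coe_le]
      exact hsubl.subperm
    have hLlen : L.length ≤ k := by
      rw [hL, List.length_map]
      have : Pg.length = P.countP (fun t => decide (t.1 ≤ K)) := by
        rw [hPg]; exact List.countP_eq_length_filter.symm
      rw [this]
      have hfst : P.map Prod.fst = cs := List.map_fst_zip (by omega)
      have : P.countP (fun t => decide (t.1 ≤ K))
          = cs.countP (fun c => decide (c ≤ K)) := by
        rw [← hfst, List.countP_map]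
        rfl
      omega
    have := sum_le_take_sorted _ hrev (↑L) hmle k (by simpa using hLlen)
    simpa using this
  -- relating take of reverse to drop
  have takedrop : ∀ k, ((orderStats ys).reverse.take k).sum
      = ((orderStats ys).drop (n - k)).sum := by
    intro k
    rw [List.take_reverse, List.sum_reverse, hoslen]
  constructor
  · -- part 1
    by_contra hlt
    push_neg at hlt
    have hcount : cs.countP (fun c => decide (c ≤ z)) ≤ 0 := by
      have h0 : (orderStats cs).countP (fun c => decide (c ≤ z)) ≤ 0 :=
        countP_le_of_sorted hcso (by omega) hlt
      have := (Multiset.coe_eq_coe.mp hcco).countP_eq (fun c => decide (c ≤ z))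
      omega
    have hb := bound z 0 hcount
    have hm := main z hz (by
      have hsum : n ≤ ys.sum := hylen ▸ length_le_sum hypos
      omega)
    simp at hb
    omega
  · -- part 2
    intro j hj2 hjn
    by_contra hlt
    push_neg at hlt
    set k := j - 1 with hk
    set S := ((orderStats ys).drop (n - k)).sum with hS
    set K := z + S with hK
    have hcount : cs.countP (fun c => decide (c ≤ K)) ≤ k := by
      have h0 : (orderStats cs).countP (fun c => decide (c ≤ K)) ≤ k :=
        countP_le_of_sorted hcso (by omega) hlt
      have := (Multiset.coe_eq_coe.mp hcco).countP_eq (fun c => decide (c ≤ K))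
      omega
    have hb := bound K k hcount
    rw [takedrop k] at hb
    -- S + 1 ≤ ys.sum
    have hsplit : ((orderStats ys).take (n - k)).sum + S = ys.sum := by
      have : ((orderStats ys).take (n - k)).sum + ((orderStats ys).drop (n - k)).sum
          = (orderStats ys).sum := by
        rw [← List.sum_append, List.take_append_drop]
      have hsum : (orderStats ys).sum = ys.sum := by
        have := congrArg Multiset.sum hco
        simpa using this
      omega
    have htakepos : 1 ≤ ((orderStats ys).take (n - k)).sum := by
      have hlen : ((orderStats ys).take (n - k)).length = n - k := by
        rw [List.length_take, hoslen]; omega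
      have hpos : ∀ y ∈ (orderStats ys).take (n - k), 0 < y := by
        intro y hy
        have hy' : y ∈ orderStats ys := List.mem_of_mem_take hy
        have : y ∈ ys := by
          have := Multiset.mem_coe.mpr hy'
          rw [hco] at this
          simpa using this
        exact hypos y this
      have := length_le_sum hpos
      omega
    have hm := main K (by omega) (by omega)
    omega
end

section
/- For y = (k,k,...,k) ∈ (Z_+)^n (all cars of length k) and trailer parameter z, the number of increasing parking sequences for (y;z) equals (z/(z+n(k+1))) · binom(z+n(k+1), n). -/
open Finset

/-- Bounds predicate: `c i ≤ a + i * k`. -/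
def Rk (k : ℕ) : ℕ → List ℕ → Prop
  | _, [] => True
  | a, c :: cs => c ≤ a ∧ Rk k (a + k) cs

/-- Count of nondecreasing parking sequences, recursively. -/
def fct (k : ℕ) : ℕ → ℕ → ℕ
  | 0, _ => 1
  | n + 1, z => ∑ j ∈ Finset.Icc 1 z, fct k n (z + k + 1 - j)

/-- Finset of increasing parking sequences. -/
def Tfin (k : ℕ) : ℕ → ℕ → Finset (List ℕ)
  | 0, _ => {[]}
  | n + 1, z => (Finset.Icc 1 z).biUnion
      (fun j => (Tfin k n (z + k + 1 - j)).image (fun ds => j :: ds.map (· + (j - 1))))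

lemma firstEmpty_Ico : ∀ (d M a c : ℕ), a = c + d → 1 ≤ c → a ≤ M →
    firstEmpty (Finset.Ico 1 a) M c = some a := by
  intro d
  induction d with
  | zero =>
    intro M a c h h1 hM
    have hac : a = c := by omega
    subst hac
    unfold firstEmpty
    have hn : M + 1 - a = (M - a) + 1 := by omega
    rw [hn, List.range'_succ, List.find?_cons_of_pos]
    simp
  | succ d ih =>
    intro M a c h h1 hM
    unfold firstEmpty
    have hn : M + 1 - c = (M - c) + 1 := by omega
    rw [hn, List.range'_succ, List.find?_cons_of_neg]
    · have hrec := ih M a (c + 1) (by omega) (by omega) hM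
      unfold firstEmpty at hrec
      have h2 : M - c = M + 1 - (c + 1) := by omega
      rw [h2]
      exact hrec
    · simp [Finset.mem_Ico]; omega

lemma parkAux_some (k : ℕ) (hk : 0 < k) :
    ∀ (cs : List ℕ) (a : ℕ), 1 ≤ a → (∀ x ∈ cs, 1 ≤ x) → Rk k a cs →
    (parkAux (a - 1 + cs.length * k) (Finset.Ico 1 a) cs
      (List.replicate cs.length k)).isSome = true := by
  intro cs
  induction cs with
  | nil => intro a ha _ _; simp [parkAux]
  | cons c cs ih =>
    intro a ha h1 hR
    obtain ⟨hca, hRt⟩ := hR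
    set M := a - 1 + (c :: cs).length * k with hM
    have hc1 : 1 ≤ c := h1 c (List.mem_cons_self)
    have haM : a ≤ M := by
      simp only [hM, List.length_cons]
      have : (cs.length + 1) * k = cs.length * k + k := by ring
      omega
    have hfe : firstEmpty (Finset.Ico 1 a) M c = some a :=
      firstEmpty_Ico (a - c) M a c (by omega) hc1 haM
    simp only [List.length_cons, List.replicate_succ, parkAux, hfe]
    have hcond : (∀ i ∈ Finset.Ico a (a + k), i ∉ Finset.Ico 1 a) ∧ a + k - 1 ≤ M := by
      constructor
      · intro i hi
        simp only [Finset.mem_Ico] at hi ⊢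
        omega
      · simp only [hM, List.length_cons]
        have : (cs.length + 1) * k = cs.length * k + k := by ring
        omega
    rw [if_pos hcond]
    have hocc : Finset.Ico 1 a ∪ Finset.Ico a (a + k) = Finset.Ico 1 (a + k) := by
      ext x
      simp only [Finset.mem_union, Finset.mem_Ico]
      omega
    rw [hocc]
    have hM' : M = (a + k) - 1 + cs.length * k := by
      simp only [hM, List.length_cons]
      have : (cs.length + 1) * k = cs.length * k + k := by ring
      omega
    rw [hM']
    have := ih (a + k) (by omega) (fun x hx => h1 x (List.mem_cons_of_mem c hx)) hRt
    simpa using this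

lemma parkAux_count : ∀ (cs ys : List ℕ) (occ : Finset ℕ) (M : ℕ) (l : List ℕ),
    parkAux M occ cs ys = some l → ∀ c0, (∀ x ∈ cs, c0 ≤ x) →
    ys.sum ≤ ((Finset.Ico c0 (M + 1)) \ occ).card := by
  intro cs
  induction cs with
  | nil =>
    intro ys occ M l h c0 _
    cases ys with
    | nil => simp
    | cons y ys => simp [parkAux] at h
  | cons c cs ih =>
    intro ys occ M l h c0 hc0
    cases ys with
    | nil => simp [parkAux] at h
    | cons y ys =>
      simp only [parkAux] at h
      split at h
      · exact absurd h (by simp)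
      · rename_i j hfe
        split at h
        · rename_i hcond
          obtain ⟨hfree, hjy⟩ := hcond
          -- j is in range' c (M+1-c)
          have hjmem : j ∈ List.range' c (M + 1 - c) :=
            List.mem_of_find?_eq_some hfe
          rw [List.mem_range'_1] at hjmem
          have hcM : c ≤ M := by omega
          have hcj : c ≤ j := hjmem.1
          have hjM : j ≤ M := by omega
          -- tail success
          obtain ⟨l', hl', _⟩ := Option.map_eq_some_iff.mp h
          have htail := ih ys (occ ∪ Finset.Ico j (j + y)) M l' hl' c0
            (fun x hx => hc0 x (List.mem_cons_of_mem c hx))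
          have hc0j : c0 ≤ j := le_trans (hc0 c (List.mem_cons_self)) hcj
          -- set decomposition
          have hdecomp : Finset.Ico c0 (M + 1) \ occ =
              (Finset.Ico c0 (M + 1) \ (occ ∪ Finset.Ico j (j + y))) ∪ Finset.Ico j (j + y) := by
            ext x
            by_cases hxo : x ∈ occ
            · have hxj : x ∉ Finset.Ico j (j + y) := fun hmem => hfree x hmem hxo
              simp only [Finset.mem_sdiff, Finset.mem_union, Finset.mem_Ico] at *
              tauto
            · simp only [Finset.mem_sdiff, Finset.mem_union, Finset.mem_Ico] at *
              constructor
              · intro ⟨hx1, _⟩; by_cases hxj : j ≤ x ∧ x < j + y <;> tauto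
              · rintro (⟨h1, h2⟩ | h1)
                · tauto
                · exact ⟨⟨by omega, by omega⟩, hxo⟩
          have hdisj : Disjoint (Finset.Ico c0 (M + 1) \ (occ ∪ Finset.Ico j (j + y)))
              (Finset.Ico j (j + y)) := by
            rw [Finset.disjoint_right]
            intro x hx hmem
            simp only [Finset.mem_sdiff, Finset.mem_union] at hmem
            exact hmem.2 (Or.inr hx)
          rw [hdecomp, Finset.card_union_of_disjoint hdisj, Nat.card_Ico]
          simp only [List.sum_cons]
          omega
        · exact absurd h (by simp)

lemma parkAux_R_rev (k : ℕ) (hk : 0 < k) :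
    ∀ (cs : List ℕ) (a : ℕ), 1 ≤ a → List.Pairwise (· ≤ ·) cs → (∀ x ∈ cs, 1 ≤ x) →
    (parkAux (a - 1 + cs.length * k) (Finset.Ico 1 a) cs
      (List.replicate cs.length k)).isSome = true → Rk k a cs := by
  intro cs
  induction cs with
  | nil => intro a _ _ _ _; trivial
  | cons c cs ih =>
    intro a ha hsort hpos hsome
    set M := a - 1 + (c :: cs).length * k with hM
    have hMeq : M = a - 1 + (cs.length + 1) * k := by simp [hM]
    have hsort' := (List.pairwise_cons.mp hsort)
    obtain ⟨l, hl⟩ := Option.isSome_iff_exists.mp hsome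
    have hca : c ≤ a := by
      by_contra hgt
      push_neg at hgt
      have hcount := parkAux_count (c :: cs) (List.replicate (c :: cs).length k)
        (Finset.Ico 1 a) M l hl c
        (fun x hx => by
          rcases List.mem_cons.mp hx with rfl | hx
          · exact le_refl x
          · exact hsort'.1 x hx)
      have hsum : (List.replicate (c :: cs).length k).sum = (cs.length + 1) * k := by
        simp [List.sum_replicate, mul_comm]
      rw [hsum] at hcount
      have hsub : Finset.Ico c (M + 1) \ Finset.Ico 1 a ⊆ Finset.Ico c (M + 1) :=
        Finset.sdiff_subset
      have hcard : (Finset.Ico c (M + 1) \ Finset.Ico 1 a).card ≤ M + 1 - c := by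
        calc (Finset.Ico c (M + 1) \ Finset.Ico 1 a).card
            ≤ (Finset.Ico c (M + 1)).card := Finset.card_le_card hsub
          _ = M + 1 - c := Nat.card_Ico c (M + 1)
      have : 0 < (cs.length + 1) * k := by positivity
      omega
    -- now c ≤ a; first car parks at a
    constructor
    · exact hca
    · have haM : a ≤ M := by
        have hk1 : (cs.length + 1) * k = cs.length * k + k := by ring
        omega
      have hc1 : 1 ≤ c := hpos c (List.mem_cons_self)
      have hfe : firstEmpty (Finset.Ico 1 a) M c = some a :=
        firstEmpty_Ico (a - c) M a c (by omega) hc1 haM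
      simp only [List.length_cons, List.replicate_succ, parkAux, hfe] at hl
      have hcond : (∀ i ∈ Finset.Ico a (a + k), i ∉ Finset.Ico 1 a) ∧ a + k - 1 ≤ M := by
        constructor
        · intro i hi
          simp only [Finset.mem_Ico] at hi ⊢
          omega
        · have hk1 : (cs.length + 1) * k = cs.length * k + k := by ring
          omega
      rw [if_pos hcond] at hl
      have hocc : Finset.Ico 1 a ∪ Finset.Ico a (a + k) = Finset.Ico 1 (a + k) := by
        ext x
        simp only [Finset.mem_union, Finset.mem_Ico]
        omega
      rw [hocc] at hl
      have hM' : M = (a + k) - 1 + cs.length * k := by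
        have hk1 : (cs.length + 1) * k = cs.length * k + k := by ring
        omega
      rw [hM'] at hl
      apply ih (a + k) (by omega) hsort'.2 (fun x hx => hpos x (List.mem_cons_of_mem c hx))
      obtain ⟨l', hl', _⟩ := Option.map_eq_some_iff.mp hl
      rw [hl']
      rfl

lemma Rk_map_add (k m : ℕ) : ∀ (ds : List ℕ) (b : ℕ), Rk k b ds →
    Rk k (b + m) (ds.map (· + m)) := by
  intro ds
  induction ds with
  | nil => intro b _; trivial
  | cons c cs ih =>
    intro b hR
    obtain ⟨h1, h2⟩ := hR
    simp only [List.map_cons]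
    refine ⟨by omega, ?_⟩
    have := ih (b + k) h2
    have heq : b + k + m = b + m + k := by omega
    rwa [heq] at this

lemma Rk_map_sub (k j : ℕ) (hj : 1 ≤ j) : ∀ (cs : List ℕ) (a : ℕ), j ≤ a → Rk k a cs →
    Rk k (a + 1 - j) (cs.map (fun x => x + 1 - j)) := by
  intro cs
  induction cs with
  | nil => intro a _ _; trivial
  | cons c cs ih =>
    intro a hja hR
    obtain ⟨h1, h2⟩ := hR
    simp only [List.map_cons]
    refine ⟨by omega, ?_⟩
    have := ih (a + k) (by omega) h2
    have heq : a + k + 1 - j = (a + 1 - j) + k := by omega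
    rwa [heq] at this

lemma Tfin_card (k : ℕ) : ∀ (n z : ℕ), (Tfin k n z).card = fct k n z := by
  intro n
  induction n with
  | zero => intro z; simp [Tfin, fct]
  | succ n ih =>
    intro z
    rw [Tfin, fct]
    rw [Finset.card_biUnion]
    · apply Finset.sum_congr rfl
      intro j _
      rw [Finset.card_image_of_injective _ ?_, ih]
      intro ds1 ds2 h
      have h1 := (List.cons.injEq _ _ _ _).mp h
      exact List.map_injective_iff.mpr (fun x y hxy => by omega) h1.2
    · intro j1 h1 j2 h2 hne
      rw [Function.onFun, Finset.disjoint_left]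
      intro l hl1 hl2
      simp only [Finset.mem_image] at hl1 hl2
      obtain ⟨d1, _, e1⟩ := hl1
      obtain ⟨d2, _, e2⟩ := hl2
      apply hne
      have := e1.trans e2.symm
      exact ((List.cons.injEq _ _ _ _).mp this).1

lemma Tfin_mem (k : ℕ) (hk : 0 < k) : ∀ (n z : ℕ) (cs : List ℕ),
    cs ∈ Tfin k n z ↔ (cs.length = n ∧ List.Pairwise (· ≤ ·) cs ∧
      (∀ x ∈ cs, 1 ≤ x) ∧ Rk k z cs) := by
  intro n
  induction n with
  | zero =>
    intro z cs
    simp only [Tfin, Finset.mem_singleton]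
    constructor
    · rintro rfl; exact ⟨rfl, List.Pairwise.nil, by simp, trivial⟩
    · rintro ⟨hlen, -, -, -⟩
      exact List.eq_nil_of_length_eq_zero hlen
  | succ n ih =>
    intro z cs
    simp only [Tfin, Finset.mem_biUnion, Finset.mem_image, Finset.mem_Icc]
    constructor
    · rintro ⟨j, ⟨hj1, hjz⟩, ds, hds, rfl⟩
      obtain ⟨hlen, hsort, hpos, hR⟩ := (ih _ ds).mp hds
      refine ⟨by simp [hlen], ?_, ?_, ?_⟩
      · rw [List.pairwise_cons]
        refine ⟨?_, ?_⟩
        · intro b hb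
          obtain ⟨d, hd, rfl⟩ := List.mem_map.mp hb
          have := hpos d hd
          omega
        · apply List.Pairwise.map
          · intro x y hxy
            have hxy' : x ≤ y := hxy
            omega
          · exact hsort
      · intro x hx
        rcases List.mem_cons.mp hx with rfl | hx
        · omega
        · obtain ⟨d, hd, rfl⟩ := List.mem_map.mp hx
          have := hpos d hd
          omega
      · refine ⟨hjz, ?_⟩
        have := Rk_map_add k (j - 1) ds (z + k + 1 - j) hR
        have heq : z + k + 1 - j + (j - 1) = z + k := by omega
        rwa [heq] at this
    · rintro ⟨hlen, hsort, hpos, hR⟩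
      cases cs with
      | nil => simp at hlen
      | cons c cs' =>
        obtain ⟨hcz, hRt⟩ := hR
        have hc1 : 1 ≤ c := hpos c (List.mem_cons_self)
        have hsort' := List.pairwise_cons.mp hsort
        refine ⟨c, ⟨hc1, hcz⟩, cs'.map (fun x => x + 1 - c), ?_, ?_⟩
        · apply (ih _ _).mpr
          refine ⟨by simpa using Nat.succ_injective hlen, ?_, ?_, ?_⟩
          · apply List.Pairwise.map
            · intro x y hxy
              have hxy' : x ≤ y := hxy
              omega
            · exact hsort'.2
          · intro x hx
            obtain ⟨d, hd, rfl⟩ := List.mem_map.mp hx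
            have := hsort'.1 d hd
            omega
          · have := Rk_map_sub k c hc1 cs' (z + k) (by omega) hRt
            have heq : z + k + 1 - c = z + k + 1 - c := rfl
            exact this
        · rw [List.map_map]
          congr 1
          have h2 : List.map ((fun x => x + (c - 1)) ∘ fun x => x + 1 - c) cs'
              = List.map id cs' :=
            List.map_congr_left (fun x hx => by
              have := hsort'.1 x hx
              simp only [Function.comp_apply, id_eq]
              omega)
          rw [h2, List.map_id]

lemma sum_choose_Icc (m A B : ℕ) (hm : m ≤ A) (hA : 1 ≤ A) (hAB : A ≤ B + 1) :
    ∑ t ∈ Finset.Icc A B, Nat.choose t m + Nat.choose A (m + 1)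
      = Nat.choose (B + 1) (m + 1) := by
  have h1 : ∑ t ∈ Finset.Icc m B, Nat.choose t m = Nat.choose (B + 1) (m + 1) :=
    Nat.sum_Icc_choose B m
  have h2 : ∑ t ∈ Finset.Icc m (A - 1), Nat.choose t m = Nat.choose A (m + 1) := by
    have := Nat.sum_Icc_choose (A - 1) m
    rwa [show A - 1 + 1 = A by omega] at this
  have hsplit : ∑ t ∈ Finset.Icc m (A - 1), Nat.choose t m
      + ∑ t ∈ Finset.Icc A B, Nat.choose t m
      = ∑ t ∈ Finset.Icc m B, Nat.choose t m := by
    rw [show Finset.Icc m (A - 1) = Finset.Ico m A by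
          ext x; simp [Finset.mem_Icc, Finset.mem_Ico]; omega,
        show Finset.Icc A B = Finset.Ico A (B + 1) by
          ext x; simp [Finset.mem_Icc, Finset.mem_Ico],
        show Finset.Icc m B = Finset.Ico m (B + 1) by
          ext x; simp [Finset.mem_Icc, Finset.mem_Ico]]
    exact Finset.sum_Ico_consecutive _ (by omega) (by omega)
  omega

lemma fct_formula (k : ℕ) (hk : 0 < k) : ∀ (n : ℕ), 1 ≤ n → ∀ (z : ℕ), 1 ≤ z →
    fct k n z + k * Nat.choose (z + n * (k + 1) - 1) (n - 1)
      = Nat.choose (z + n * (k + 1) - 1) n := by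
  intro n
  induction n with
  | zero => intro h; omega
  | succ n ih =>
    intro _ z hz
    rcases Nat.eq_zero_or_pos n with rfl | hn
    · -- base case n = 1
      have h1 : fct k 1 z = z := by
        rw [fct]
        rw [Finset.sum_congr rfl (fun j _ => by rw [fct])]
        simp
      rw [h1]
      simp only [Nat.add_sub_cancel, Nat.choose_zero_right]
      rw [show z + 1 * (k + 1) - 1 = z + k by omega]
      rw [Nat.choose_one_right]
      omega
    · -- inductive step
      set A := k + n * (k + 1) with hA
      set B1 := z + k + n * (k + 1) with hB1
      have hn1 : n ≤ n * (k + 1) := Nat.le_mul_of_pos_right n (by omega)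
      -- reindex fct sum and choose sums
      have hre : ∀ (g : ℕ → ℕ), ∑ j ∈ Finset.Icc 1 z, g (z + k + 1 - j)
          = ∑ t ∈ Finset.Icc (k + 1) (z + k), g t := by
        intro g
        apply Finset.sum_nbij' (fun j => z + k + 1 - j) (fun t => z + k + 1 - t)
        · intro j hj; simp only [Finset.mem_Icc] at *; omega
        · intro t ht; simp only [Finset.mem_Icc] at *; omega
        · intro j hj; simp only [Finset.mem_Icc] at hj; omega
        · intro t ht; simp only [Finset.mem_Icc] at ht; omega
        · intro j hj; rfl
      have hIH : ∀ t ∈ Finset.Icc (k + 1) (z + k),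
          fct k n t + k * Nat.choose (t + n * (k + 1) - 1) (n - 1)
            = Nat.choose (t + n * (k + 1) - 1) n := by
        intro t ht
        simp only [Finset.mem_Icc] at ht
        exact ih hn t (by omega)
      -- shift index: t + n*(k+1) - 1 for t ∈ Icc (k+1) (z+k) ranges over Icc A (B1-1)
      have hshift : ∀ (m : ℕ), ∑ t ∈ Finset.Icc (k + 1) (z + k),
          Nat.choose (t + n * (k + 1) - 1) m
            = ∑ s ∈ Finset.Icc A (B1 - 1), Nat.choose s m := by
        intro m
        apply Finset.sum_nbij' (fun t => t + n * (k + 1) - 1) (fun s => s + 1 - n * (k + 1))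
        · intro t ht; simp only [Finset.mem_Icc] at *; omega
        · intro s hs; simp only [Finset.mem_Icc] at *; omega
        · intro t ht; simp only [Finset.mem_Icc] at ht; omega
        · intro s hs; simp only [Finset.mem_Icc] at hs; omega
        · intro t ht; rfl
      have claim1 : fct k (n + 1) z
          + k * ∑ s ∈ Finset.Icc A (B1 - 1), Nat.choose s (n - 1)
          = ∑ s ∈ Finset.Icc A (B1 - 1), Nat.choose s n := by
        rw [fct, hre (fct k n), ← hshift, ← hshift, Finset.mul_sum, ← Finset.sum_add_distrib]
        exact Finset.sum_congr rfl hIH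
      have claim2 : ∑ s ∈ Finset.Icc A (B1 - 1), Nat.choose s (n - 1) + Nat.choose A n
          = Nat.choose B1 n := by
        have := sum_choose_Icc (n - 1) A (B1 - 1) (by omega) (by omega) (by omega)
        rw [show n - 1 + 1 = n by omega] at this
        rwa [show B1 - 1 + 1 = B1 by omega] at this
      have claim3 : ∑ s ∈ Finset.Icc A (B1 - 1), Nat.choose s n + Nat.choose A (n + 1)
          = Nat.choose B1 (n + 1) := by
        have := sum_choose_Icc n A (B1 - 1) (by omega) (by omega) (by omega)
        rwa [show B1 - 1 + 1 = B1 by omega] at this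
      have claim4 : k * Nat.choose A n = Nat.choose A (n + 1) := by
        have h := Nat.choose_succ_right_eq A n
        have e1 : n * (k + 1) = n * k + n := by ring
        have e2 : (n + 1) * k = n * k + k := by ring
        have hAn : A - n = (n + 1) * k := by omega
        rw [hAn] at h
        have : Nat.choose A (n + 1) * (n + 1) = k * Nat.choose A n * (n + 1) := by
          rw [h]; ring
        exact (Nat.eq_of_mul_eq_mul_right (by omega) this).symm
      have hgoal : z + (n + 1) * (k + 1) - 1 = B1 := by
        have : (n + 1) * (k + 1) = n * (k + 1) + k + 1 := by ring
        omega
      rw [hgoal, show n + 1 - 1 = n from rfl, ← claim2, Nat.mul_add, ← Nat.add_assoc,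
        claim1, claim4, claim3]

theorem stmt3 (n k z : ℕ) (hn : 0 < n) (hk : 0 < k) (hz : 0 < z) :
    {cs : List ℕ | cs.length = n ∧ List.Pairwise (· ≤ ·) cs ∧
        IsParkingSeq (List.replicate n k) cs z}.ncard * (z + n * (k + 1))
      = z * (z + n * (k + 1)).choose n := by
  have hset : {cs : List ℕ | cs.length = n ∧ List.Pairwise (· ≤ ·) cs ∧
      IsParkingSeq (List.replicate n k) cs z} = ↑(Tfin k n z) := by
    ext cs
    simp only [Set.mem_setOf_eq, Finset.mem_coe]
    rw [Tfin_mem k hk]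
    constructor
    · rintro ⟨hlen, hsort, hlen', hpos, hsome⟩
      subst hlen
      refine ⟨rfl, hsort, hpos, ?_⟩
      apply parkAux_R_rev k hk cs z hz hsort hpos
      rw [parkResult, List.sum_replicate, smul_eq_mul] at hsome
      exact hsome
    · rintro ⟨hlen, hsort, hpos, hR⟩
      subst hlen
      refine ⟨rfl, hsort, by simp, hpos, ?_⟩
      rw [parkResult, List.sum_replicate, smul_eq_mul]
      exact parkAux_some k hk cs z hz hpos hR
  rw [hset, Set.ncard_coe_finset, Tfin_card]
  set N := z + n * (k + 1) with hN
  have e1 : n * (k + 1) = n * k + n := by ring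
  have hf := fct_formula k hk n hn z hz
  rw [← hN] at hf
  have h1 : Nat.choose (N - 1) n * N = Nat.choose N n * (N - n) := by
    have := Nat.choose_mul_succ_eq (N - 1) n
    rwa [show N - 1 + 1 = N by omega] at this
  have h2 : N * Nat.choose (N - 1) (n - 1) = Nat.choose N n * n := by
    have := Nat.add_one_mul_choose_eq (N - 1) (n - 1)
    rwa [show N - 1 + 1 = N by omega,
      show n - 1 + 1 = n by omega] at this
  have key : fct k n z * N + k * (Nat.choose N n * n) = Nat.choose (N - 1) n * N := by
    rw [← h2]
    calc fct k n z * N + k * (N * Nat.choose (N - 1) (n - 1))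
        = (fct k n z + k * Nat.choose (N - 1) (n - 1)) * N := by ring
      _ = Nat.choose (N - 1) n * N := by rw [hf]
  rw [h1] at key
  have hNn : N - n = z + n * k := by omega
  rw [hNn] at key
  have expand : Nat.choose N n * (z + n * k)
      = z * Nat.choose N n + k * (Nat.choose N n * n) := by ring
  rw [expand] at key
  exact Nat.add_right_cancel key
end

section
/- For y = (k,k,...,k) ∈ (Z_+)^n and z = 1, the number of increasing parking sequences for (y;1) equals the Fuss–Catalan number (1/(kn+1)) · binom((k+1)n, n). -/
open Finset

lemma firstEmpty_Ico_s4 (e M c : ℕ) (hc1 : 1 ≤ c) (hce : c ≤ e) (heM : e ≤ M) :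
    firstEmpty (Finset.Ico 1 e) M c = some e := by
  unfold firstEmpty
  have hsplit : List.range' c (e - c) ++ List.range' e (M + 1 - e) = List.range' c (M + 1 - c) := by
    have := List.range'_append (s := c) (m := e - c) (n := M + 1 - e) (step := 1)
    simpa [Nat.one_mul, Nat.add_sub_cancel' hce, (by omega : M + 1 - e + (e - c) = M + 1 - c),
      (by omega : e - c + (M + 1 - e) = M + 1 - c)]
      using this
  rw [← hsplit, List.find?_append]
  have h1 : (List.range' c (e - c)).find? (fun j => decide (j ∉ Finset.Ico 1 e)) = none := by
    rw [List.find?_eq_none]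
    intro x hx
    rw [List.mem_range'] at hx
    obtain ⟨i, hi, rfl⟩ := hx
    simp only [decide_eq_true_eq, Finset.mem_Ico, not_not]
    constructor <;> omega
  rw [h1]
  have h2 : M + 1 - e = (M - e) + 1 := by omega
  rw [h2, List.range'_succ]
  simp [List.find?_cons]

lemma forwardAux (k : ℕ) (hk : 0 < k) :
    ∀ (cs : List ℕ) (i n : ℕ), i + cs.length = n →
    (∀ c ∈ cs, 1 ≤ c) →
    (∀ t, t < cs.length → cs.getD t 0 ≤ 1 + (i + t) * k) →
    (parkAux (n * k) (Finset.Ico 1 (1 + i * k)) cs (List.replicate cs.length k)).isSome := by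
  intro cs
  induction cs with
  | nil => intro i n _ _ _; simp [parkAux]
  | cons c cs ih =>
    intro i n hlen h1 hb
    have hin : i < n := by simp at hlen; omega
    have hc1 : 1 ≤ c := h1 c List.mem_cons_self
    have hce : c ≤ 1 + i * k := by
      have := hb 0 (by simp)
      simpa using this
    have hmul : (i + 1) * k ≤ n * k := Nat.mul_le_mul_right k hin
    have hmul' : (i + 1) * k = i * k + k := Nat.succ_mul i k
    have heM : 1 + i * k ≤ n * k := by omega
    have hfe := firstEmpty_Ico_s4 (1 + i * k) (n * k) c hc1 hce heM
    rw [List.length_cons, List.replicate_succ]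
    simp only [parkAux, hfe]
    have hguard : (∀ x ∈ Finset.Ico (1 + i * k) (1 + i * k + k), x ∉ Finset.Ico 1 (1 + i * k)) ∧
        1 + i * k + k - 1 ≤ n * k := by
      constructor
      · intro x hx
        simp only [Finset.mem_Ico] at hx ⊢
        omega
      · omega
    rw [if_pos hguard]
    have hunion : Finset.Ico 1 (1 + i * k) ∪ Finset.Ico (1 + i * k) (1 + i * k + k)
        = Finset.Ico 1 (1 + (i + 1) * k) := by
      rw [Finset.Ico_union_Ico_eq_Ico (by omega) (by omega)]
      congr 1
      ring
    rw [hunion]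
    have := ih (i + 1) n (by simp at hlen ⊢; omega)
      (fun x hx => h1 x (List.mem_cons_of_mem _ hx))
      (fun t ht => by
        have := hb (t + 1) (by simpa using Nat.succ_lt_succ ht)
        simpa [Nat.add_assoc, Nat.add_comm 1 t, Nat.add_left_comm] using this)
    simpa [Option.isSome_map] using this

lemma firstEmpty_mem {occ : Finset ℕ} {M c j : ℕ} (h : firstEmpty occ M c = some j) :
    c ≤ j ∧ j ≤ M ∧ j ∉ occ := by
  unfold firstEmpty at h
  have h1 := List.mem_of_find?_eq_some h
  have h2 := List.find?_some h
  rw [List.mem_range'] at h1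
  obtain ⟨i, hi, rfl⟩ := h1
  simp only [decide_eq_true_eq] at h2
  exact ⟨by omega, by omega, h2⟩

lemma parkAux_cons {M : ℕ} {occ : Finset ℕ} {c y : ℕ} {cs ys L : List ℕ}
    (h : parkAux M occ (c :: cs) (y :: ys) = some L) :
    ∃ j L', firstEmpty occ M c = some j ∧
      (∀ i ∈ Finset.Ico j (j + y), i ∉ occ) ∧ j + y - 1 ≤ M ∧
      parkAux M (occ ∪ Finset.Ico j (j + y)) cs ys = some L' ∧ L = j :: L' := by
  cases hfe : firstEmpty occ M c with
  | none => simp [parkAux, hfe] at h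
  | some j =>
    simp only [parkAux, hfe] at h
    split_ifs at h with hg
    · cases hrec : parkAux M (occ ∪ Finset.Ico j (j + y)) cs ys with
      | none => rw [hrec] at h; simp at h
      | some L' =>
        rw [hrec] at h
        simp only [Option.map_some] at h
        exact ⟨j, L', rfl, hg.1, hg.2, hrec, (Option.some_injective _ h).symm⟩

lemma parkAux_nil_ys {M : ℕ} {occ : Finset ℕ} {c : ℕ} {cs L : List ℕ}
    (h : parkAux M occ (c :: cs) [] = some L) : False := by
  simp [parkAux] at h

lemma parkAux_card : ∀ (cs ys : List ℕ) (M : ℕ) (occ : Finset ℕ) (L : List ℕ) (b : ℕ),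
    parkAux M occ cs ys = some L → (∀ y ∈ ys, 1 ≤ y) → (∀ c ∈ cs, b ≤ c) →
    ∃ U : Finset ℕ, U ⊆ Finset.Ico b (M + 1) ∧ Disjoint U occ ∧ U.card = ys.sum := by
  intro cs
  induction cs with
  | nil =>
    intro ys M occ L b h _ _
    cases ys with
    | nil => exact ⟨∅, by simp, by simp, by simp⟩
    | cons y ys => simp [parkAux] at h
  | cons c cs ih =>
    intro ys M occ L b h hy hb
    cases ys with
    | nil => exact absurd h parkAux_nil_ys
    | cons y ys =>
      obtain ⟨j, L', hfe, hg1, hg2, hrec, rfl⟩ := parkAux_cons h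
      obtain ⟨hcj, hjM, hjocc⟩ := firstEmpty_mem hfe
      have hy1 : 1 ≤ y := hy y List.mem_cons_self
      obtain ⟨U', hU'sub, hU'disj, hU'card⟩ := ih ys M (occ ∪ Finset.Ico j (j + y)) L' b hrec
        (fun x hx => hy x (List.mem_cons_of_mem _ hx))
        (fun x hx => hb x (List.mem_cons_of_mem _ hx))
      refine ⟨Finset.Ico j (j + y) ∪ U', ?_, ?_, ?_⟩
      · apply Finset.union_subset
        · intro x hx
          simp only [Finset.mem_Ico] at hx ⊢
          have := hb c List.mem_cons_self
          omega
        · exact hU'sub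
      · rw [Finset.disjoint_union_left]
        constructor
        · rw [Finset.disjoint_left]; exact fun x hx hx' => hg1 x hx hx'
        · exact Finset.disjoint_of_subset_right Finset.subset_union_left hU'disj
      · have hdisj : Disjoint (Finset.Ico j (j + y)) U' :=
          (Finset.disjoint_of_subset_right Finset.subset_union_right hU'disj).symm
        rw [Finset.card_union_of_disjoint hdisj, Nat.card_Ico, hU'card, List.sum_cons]
        omega

lemma parkAux_suffix : ∀ (i : ℕ) (cs ys : List ℕ) (M : ℕ) (occ : Finset ℕ) (L : List ℕ),
    parkAux M occ cs ys = some L →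
    ∃ occ' L', parkAux M occ' (cs.drop i) (ys.drop i) = some L' := by
  intro i
  induction i with
  | zero => intro cs ys M occ L h; exact ⟨occ, L, by simpa using h⟩
  | succ i ih =>
    intro cs ys M occ L h
    cases cs with
    | nil =>
      cases ys with
      | nil => exact ⟨occ, [], by simp [parkAux]⟩
      | cons y ys => simp [parkAux] at h
    | cons c cs =>
      cases ys with
      | nil => exact absurd h parkAux_nil_ys
      | cons y ys =>
        obtain ⟨j, L', _, _, _, hrec, _⟩ := parkAux_cons h
        simpa using ih cs ys M _ L' hrec

lemma sorted_getD_le {cs : List ℕ} (hs : List.Pairwise (· ≤ ·) cs) {a b : ℕ}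
    (hab : a ≤ b) (hb : b < cs.length) : cs.getD a 0 ≤ cs.getD b 0 := by
  have ha : a < cs.length := lt_of_le_of_lt hab hb
  rw [List.getD_eq_getElem cs 0 ha, List.getD_eq_getElem cs 0 hb]
  exact hs.rel_get_of_le (a := ⟨a, ha⟩) (b := ⟨b, hb⟩) hab

lemma partA (n k : ℕ) (hk : 0 < k) (cs : List ℕ) (hs : List.Pairwise (· ≤ ·) cs) :
    IsParkingSeq (List.replicate n k) cs 1 ↔
    (cs.length = n ∧ (∀ c ∈ cs, 1 ≤ c) ∧ ∀ i < n, cs.getD i 0 ≤ 1 + i * k) := by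
  have hsum : (List.replicate n k).sum = n * k := by simp [List.sum_replicate]
  have hM : 1 - 1 + (List.replicate n k).sum = n * k := by simp [hsum]
  constructor
  · rintro ⟨hlen, h1, hsome⟩
    rw [List.length_replicate] at hlen
    refine ⟨hlen, h1, ?_⟩
    by_contra hbad
    push_neg at hbad
    obtain ⟨i, hi, hbi⟩ := hbad
    obtain ⟨L, hL⟩ := Option.isSome_iff_exists.mp hsome
    rw [parkResult, hM] at hL
    obtain ⟨occ', L', hsuf⟩ := parkAux_suffix i cs (List.replicate n k) (n * k) _ L hL
    rw [List.drop_replicate] at hsuf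
    set b := cs.getD i 0 with hb
    obtain ⟨U, hUsub, _, hUcard⟩ := parkAux_card (cs.drop i) (List.replicate (n - i) k)
      (n * k) occ' L' b hsuf
      (by intro y hy; rw [List.eq_of_mem_replicate hy]; exact hk)
      (by
        intro x hx
        rw [List.mem_iff_getElem] at hx
        obtain ⟨t, ht, rfl⟩ := hx
        rw [List.getElem_drop]
        have hit : i + t < cs.length := by
          rw [List.length_drop] at ht; omega
        rw [← List.getD_eq_getElem cs 0 hit]
        exact sorted_getD_le hs (Nat.le_add_right i t) hit)
    have hle := Finset.card_le_card hUsub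
    rw [hUcard, Nat.card_Ico] at hle
    rw [List.sum_replicate, smul_eq_mul] at hle
    have h1 : (n - i) * k = n * k - i * k := Nat.sub_mul n i k
    have h2 : (i + 1) * k ≤ n * k := Nat.mul_le_mul_right k hi
    have h3 : (i + 1) * k = i * k + k := Nat.succ_mul i k
    omega
  · rintro ⟨hlen, h1, hb⟩
    refine ⟨by simp [hlen], h1, ?_⟩
    rw [parkResult, hM]
    have := forwardAux k hk cs 0 n (by omega) h1
      (by intro t ht; simpa using hb t (by omega))
    rw [hlen] at this
    simpa using this

lemma sorted_count_ge {cs : List ℕ} (hs : List.Pairwise (· ≤ ·) cs) {i j : ℕ}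
    (hi : i < cs.length) (hij : cs.getD i 0 ≤ j) :
    i + 1 ≤ cs.countP (fun c => decide (c ≤ j)) := by
  have h := List.take_append_drop (i + 1) cs
  have hcount : (cs.take (i + 1)).countP (fun c => decide (c ≤ j)) = i + 1 := by
    have hall : ∀ a ∈ cs.take (i + 1), (fun c => decide (c ≤ j)) a = true := by
      intro a ha
      rw [List.mem_iff_getElem] at ha
      obtain ⟨t, ht, rfl⟩ := ha
      rw [List.getElem_take]
      have htl : t < cs.length := by
        have := ht; rw [List.length_take] at this; omega
      have hti : t ≤ i := by
        have := ht; rw [List.length_take] at this; omega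
      simp only [decide_eq_true_eq]
      calc cs[t] = cs.getD t 0 := (List.getD_eq_getElem cs 0 htl).symm
        _ ≤ cs.getD i 0 := sorted_getD_le hs hti hi
        _ ≤ j := hij
    rw [List.countP_eq_length.mpr hall, List.length_take]
    omega
  calc i + 1 = (cs.take (i + 1)).countP (fun c => decide (c ≤ j)) := hcount.symm
    _ ≤ _ := by
        conv_rhs => rw [← h]
        rw [List.countP_append]
        omega

lemma sorted_getD_le_of_count {cs : List ℕ} (hs : List.Pairwise (· ≤ ·) cs) {i j : ℕ}
    (hi : i < cs.length) (hcnt : i + 1 ≤ cs.countP (fun c => decide (c ≤ j))) :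
    cs.getD i 0 ≤ j := by
  by_contra hgt
  push_neg at hgt
  have h := List.take_append_drop i cs
  have hdrop : (cs.drop i).countP (fun c => decide (c ≤ j)) = 0 := by
    rw [List.countP_eq_zero]
    intro a ha
    rw [List.mem_iff_getElem] at ha
    obtain ⟨t, ht, rfl⟩ := ha
    rw [List.getElem_drop]
    have hit : i + t < cs.length := by rw [List.length_drop] at ht; omega
    simp only [decide_eq_true_eq, not_le]
    calc j < cs.getD i 0 := hgt
      _ ≤ cs.getD (i + t) 0 := sorted_getD_le hs (Nat.le_add_right i t) hit
      _ = cs[i + t] := List.getD_eq_getElem cs 0 hit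
  have : cs.countP (fun c => decide (c ≤ j)) ≤ i := by
    conv_lhs => rw [← h]
    rw [List.countP_append, hdrop]
    have := List.countP_le_length (p := fun c => decide (c ≤ j)) (l := cs.take i)
    rw [List.length_take] at this
    omega
  omega

lemma partB (n k : ℕ) (hk : 0 < k) (cs : List ℕ) (hs : List.Pairwise (· ≤ ·) cs)
    (hlen : cs.length = n) :
    (∀ i < n, cs.getD i 0 ≤ 1 + i * k) ↔
    (∀ j, 1 ≤ j → j ≤ k * n → j ≤ k * cs.countP (fun c => decide (c ≤ j))) := by
  constructor
  · intro hb j hj1 hjn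
    set i := (j - 1) / k with hi
    have hik : k * i + (j - 1) % k = j - 1 := Nat.div_add_mod (j - 1) k
    have hmod : (j - 1) % k < k := Nat.mod_lt _ hk
    have hin : i < n := by
      by_contra habs
      push_neg at habs
      have : k * n ≤ k * i := Nat.mul_le_mul_left k habs
      omega
    have hci : cs.getD i 0 ≤ j := by
      have := hb i hin
      have hcm : i * k = k * i := Nat.mul_comm i k
      omega
    have := sorted_count_ge hs (by omega : i < cs.length) hci
    calc j ≤ k * i + k := by omega
      _ = k * (i + 1) := by ring
      _ ≤ k * cs.countP (fun c => decide (c ≤ j)) := Nat.mul_le_mul_left k this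
  · intro hc i hin
    have hj1 : 1 ≤ i * k + 1 := by omega
    have hjn : i * k + 1 ≤ k * n := by
      have : (i + 1) * k ≤ n * k := Nat.mul_le_mul_right k hin
      have h3 : (i + 1) * k = i * k + k := Nat.succ_mul i k
      have hcm : i * k = k * i := Nat.mul_comm i k
      have hcm2 : n * k = k * n := Nat.mul_comm n k
      omega
    have := hc (i * k + 1) hj1 hjn
    have hcnt : i + 1 ≤ cs.countP (fun c => decide (c ≤ i * k + 1)) := by
      by_contra habs
      push_neg at habs
      have : cs.countP (fun c => decide (c ≤ i * k + 1)) ≤ i := by omega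
      have := Nat.mul_le_mul_left k this
      have hcm : i * k = k * i := Nat.mul_comm i k
      omega
    have := sorted_getD_le_of_count hs (by omega : i < cs.length) hcnt
    omega

open Finset

section Cycle

variable {m : ℕ} [NeZero m]

lemma card_eq_sum_count (t : Multiset (ZMod m)) :
    Multiset.card t = ∑ x ∈ Finset.univ, t.count x := by
  rw [← Multiset.toFinset_sum_count_eq]
  apply Finset.sum_subset (Finset.subset_univ _)
  intro x _ hx
  exact Multiset.count_eq_zero_of_notMem (by simpa using hx)

lemma countP_eq_sum_count (s : Multiset (ZMod m)) (p : ZMod m → Prop) [DecidablePred p] :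
    s.countP p = ∑ x ∈ Finset.univ.filter p, s.count x := by
  rw [Multiset.countP_eq_card_filter, card_eq_sum_count]
  rw [Finset.sum_filter]
  congr 1
  ext x
  rw [Multiset.count_filter]

lemma sum_Ico_count (s : Multiset (ZMod m)) (t j : ℕ) (hj : j ≤ m) :
    ∑ v ∈ Finset.Ico t (t + j), s.count ((v : ZMod m))
      = s.countP (fun x => (x - (t : ZMod m)).val < j) := by
  rw [countP_eq_sum_count]
  refine Finset.sum_nbij' (fun v => ((v : ZMod m)))
    (fun x => t + (x - (t : ZMod m)).val) ?_ ?_ ?_ ?_ ?_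
  · intro v hv
    rw [Finset.mem_Ico] at hv
    rw [Finset.mem_filter]
    refine ⟨Finset.mem_univ _, ?_⟩
    have hsub : ((v : ZMod m)) - (t : ZMod m) = ((v - t : ℕ) : ZMod m) := by
      rw [Nat.cast_sub hv.1]
    rw [hsub, ZMod.val_natCast, Nat.mod_eq_of_lt (by omega)]
    omega
  · intro x hx
    rw [Finset.mem_filter] at hx
    show t + (x - (t : ZMod m)).val ∈ Finset.Ico t (t + j)
    rw [Finset.mem_Ico]
    omega
  · intro v hv
    rw [Finset.mem_Ico] at hv
    show t + (((v : ZMod m)) - (t : ZMod m)).val = v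
    have hsub : ((v : ZMod m)) - (t : ZMod m) = ((v - t : ℕ) : ZMod m) := by
      rw [Nat.cast_sub hv.1]
    rw [hsub, ZMod.val_natCast, Nat.mod_eq_of_lt (by omega)]
    omega
  · intro x hx
    show ((t + (x - (t : ZMod m)).val : ℕ) : ZMod m) = x
    push_cast
    rw [ZMod.natCast_val, ZMod.cast_id]
    ring
  · intro v hv
    rfl

def preS (s : Multiset (ZMod m)) (j : ℕ) : ℕ := ∑ v ∈ Finset.range j, s.count ((v : ZMod m))

omit [NeZero m] in
lemma preS_mono (s : Multiset (ZMod m)) {a b : ℕ} (h : a ≤ b) : preS s a ≤ preS s b :=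
  Finset.sum_le_sum_of_subset (Finset.range_subset_range.mpr h)

lemma preS_add (s : Multiset (ZMod m)) (t j : ℕ) (hj : j ≤ m) :
    preS s (t + j) = preS s t + s.countP (fun x => (x - (t : ZMod m)).val < j) := by
  rw [← sum_Ico_count s t j hj]
  unfold preS
  rw [Finset.range_eq_Ico, Finset.range_eq_Ico]
  exact (Finset.sum_Ico_consecutive (fun v : ℕ => s.count ((v : ZMod m))) (Nat.zero_le t) (Nat.le_add_right t j)).symm

lemma preS_period (s : Multiset (ZMod m)) (t : ℕ) :
    preS s (t + m) = preS s t + Multiset.card s := by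
  rw [preS_add s t m (le_refl m)]
  congr 1
  rw [countP_eq_sum_count]
  rw [Finset.filter_true_of_mem (fun x _ => ZMod.val_lt _)]
  exact (card_eq_sum_count s).symm

end Cycle

def mcond (k n : ℕ) (s : Multiset (ZMod (k * n + 1))) : Prop :=
  ∀ j, 1 ≤ j → j ≤ k * n → j ≤ k * s.countP (fun x => x.val < j)

def gS (k : ℕ) {m : ℕ} (s : Multiset (ZMod m)) (j : ℕ) : ℤ := (k : ℤ) * preS s j - j

lemma gS_period {n k : ℕ} (s : Multiset (ZMod (k * n + 1))) (hs : Multiset.card s = n)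
    (t : ℕ) : gS k s (t + (k * n + 1)) = gS k s t - 1 := by
  unfold gS
  rw [preS_period, hs]
  push_cast
  ring

lemma mcond_shift {n k : ℕ} (s : Multiset (ZMod (k * n + 1))) (t : ℕ) :
    mcond k n (s.map (· - (t : ZMod (k * n + 1)))) ↔
      (∀ j, 1 ≤ j → j ≤ k * n → gS k s t ≤ gS k s (t + j)) := by
  unfold mcond
  apply forall_congr'
  intro j
  apply imp_congr_right
  intro hj1
  apply imp_congr_right
  intro hj2
  have hcnt : (s.map (· - (t : ZMod (k * n + 1)))).countP (fun x => x.val < j)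
      = s.countP (fun x => (x - (t : ZMod (k * n + 1))).val < j) := by
    rw [Multiset.countP_map, ← Multiset.countP_eq_card_filter]
  rw [hcnt]
  have hadd := preS_add s t j (by omega)
  have hmono : preS s t ≤ preS s (t + j) := preS_mono s (Nat.le_add_right t j)
  unfold gS
  have heq : (preS s (t + j) : ℤ) = (preS s t : ℤ)
      + (s.countP (fun x => (x - (t : ZMod (k * n + 1))).val < j) : ℤ) := by
    exact_mod_cast hadd
  have hk2 : (k : ℤ) * (preS s (t + j) : ℤ) = (k : ℤ) * (preS s t : ℤ)
      + (k : ℤ) * (s.countP (fun x => (x - (t : ZMod (k * n + 1))).val < j) : ℤ) := by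
    rw [heq]; ring
  constructor
  · intro h
    have h' : (j : ℤ) ≤ (k : ℤ)
        * (s.countP (fun x => (x - (t : ZMod (k * n + 1))).val < j) : ℤ) := by
      exact_mod_cast h
    push_cast
    linarith
  · intro h
    have h' : (j : ℤ) ≤ (k : ℤ)
        * (s.countP (fun x => (x - (t : ZMod (k * n + 1))).val < j) : ℤ) := by
      push_cast at h
      linarith
    exact_mod_cast h'

lemma cycle_core (m : ℕ) (hm : 0 < m) (g : ℕ → ℤ) (hper : ∀ t, g (t + m) = g t - 1) :
    ∃! t₀, t₀ < m ∧ ∀ j, 1 ≤ j → j ≤ m - 1 → g t₀ ≤ g (t₀ + j) := by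
  classical
  obtain ⟨t', ht'mem, ht'min⟩ := Finset.exists_min_image (Finset.range m) g
    ⟨0, Finset.mem_range.mpr hm⟩
  set μ := g t' with hμ
  have hP : ∃ t, t < m ∧ g t = μ := ⟨t', Finset.mem_range.mp ht'mem, rfl⟩
  set t₀ := Nat.find hP with ht₀
  obtain ⟨ht₀m, ht₀g⟩ := Nat.find_spec hP
  have hmin : ∀ u, u < m → μ ≤ g u := fun u hu => ht'min u (Finset.mem_range.mpr hu)
  have hlt : ∀ u, u < t₀ → μ + 1 ≤ g u := by
    intro u hu
    have h1 := Nat.find_min hP hu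
    have h2 := hmin u (lt_trans hu ht₀m)
    have h3 : g u ≠ μ := fun he => h1 ⟨lt_trans hu ht₀m, he⟩
    omega
  refine ⟨t₀, ⟨ht₀m, ?_⟩, ?_⟩
  · intro j hj1 hj2
    by_cases hcase : t₀ + j < m
    · rw [ht₀g]; exact hmin _ hcase
    · have hu : t₀ + j - m < t₀ := by omega
      have he : t₀ + j = (t₀ + j - m) + m := by omega
      rw [he, hper, ht₀g]
      have := hlt _ hu
      omega
  · rintro t ⟨htm, hgt⟩
    by_contra hne
    rcases Nat.lt_or_ge t t₀ with hlt' | hge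
    · have h1 := hgt (t₀ - t) (by omega) (by omega)
      rw [(by omega : t + (t₀ - t) = t₀), ht₀g] at h1
      have h2 := hlt t hlt'
      omega
    · have htgt : t₀ < t := by omega
      have h1 := hgt (t₀ + m - t) (by omega) (by omega)
      rw [(by omega : t + (t₀ + m - t) = t₀ + m), hper, ht₀g] at h1
      have h2 := hmin t htm
      omega

lemma cycle_exists_unique {n k : ℕ} (hn : 0 < n) (hk : 0 < k)
    (s : Multiset (ZMod (k * n + 1))) (hs : Multiset.card s = n) :
    ∃! t : ZMod (k * n + 1), mcond k n (s.map (· - t)) := by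
  obtain ⟨t₀, ⟨ht₀m, hgood⟩, huniq⟩ := cycle_core (k * n + 1) (Nat.succ_pos _) (gS k s)
    (gS_period s hs)
  refine ⟨(t₀ : ZMod (k * n + 1)), ?_, ?_⟩
  · show mcond k n (Multiset.map (fun x => x - ((t₀ : ℕ) : ZMod (k * n + 1))) s)
    rw [show (Multiset.map (fun x => x - ((t₀ : ℕ) : ZMod (k * n + 1))) s)
      = s.map (· - ((t₀ : ℕ) : ZMod (k * n + 1))) from rfl, mcond_shift s t₀]
    intro j hj1 hj2
    exact hgood j hj1 (by omega)
  · intro τ hτ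
    have hv : ((τ.val : ℕ) : ZMod (k * n + 1)) = τ := ZMod.natCast_rightInverse τ
    rw [← hv] at hτ
    have hgt : ∀ j, 1 ≤ j → j ≤ k * n + 1 - 1 → gS k s τ.val ≤ gS k s (τ.val + j) := by
      intro j hj1 hj2
      exact (mcond_shift s τ.val).mp hτ j hj1 (by omega)
    have := huniq τ.val ⟨ZMod.val_lt τ, hgt⟩
    rw [← hv, this]

def Pprop (n k : ℕ) (cs : List ℕ) : Prop :=
  cs.length = n ∧ List.Pairwise (· ≤ ·) cs ∧ (∀ c ∈ cs, 1 ≤ c) ∧ ∀ i < n, cs.getD i 0 ≤ 1 + i * k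

def encodeL (n k : ℕ) (cs : List ℕ) : Multiset (ZMod (k * n + 1)) :=
  ↑(cs.map (fun c => ((c - 1 : ℕ) : ZMod (k * n + 1))))

lemma Pprop_le {n k : ℕ} (hk : 0 < k) {cs : List ℕ} (h : Pprop n k cs) :
    ∀ c ∈ cs, c ≤ k * n := by
  intro c hc
  rw [List.mem_iff_getElem] at hc
  obtain ⟨i, hi, rfl⟩ := hc
  have hl : cs.length = n := h.1
  have hin : i < n := by omega
  have hb := h.2.2.2 i hin
  rw [List.getD_eq_getElem cs 0 hi] at hb
  have h2 : (i + 1) * k ≤ n * k := Nat.mul_le_mul_right k hin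
  have h3 : (i + 1) * k = i * k + k := Nat.succ_mul i k
  have h4 : n * k = k * n := Nat.mul_comm n k
  omega

lemma encode_countP {n k : ℕ} (hk : 0 < k) {cs : List ℕ} (h : Pprop n k cs)
    (j : ℕ) :
    (encodeL n k cs).countP (fun x => x.val < j) = cs.countP (fun c => decide (c ≤ j)) := by
  unfold encodeL
  rw [Multiset.coe_countP, List.countP_map]
  apply List.countP_congr
  intro c hc
  have h1 : 1 ≤ c := h.2.2.1 c hc
  have h2 : c ≤ k * n := Pprop_le hk h c hc
  have hval : (((c - 1 : ℕ) : ZMod (k * n + 1))).val = c - 1 := by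
    rw [ZMod.val_natCast, Nat.mod_eq_of_lt (by omega)]
  simp only [Function.comp, hval, decide_eq_true_eq]
  omega

lemma encode_mcond {n k : ℕ} (hk : 0 < k) {cs : List ℕ} (h : Pprop n k cs) :
    mcond k n (encodeL n k cs) := by
  intro j hj1 hj2
  rw [encode_countP hk h j]
  exact (partB n k hk cs h.2.1 h.1).mp h.2.2.2 j hj1 hj2

def decodeL (n k : ℕ) (u : Multiset (ZMod (k * n + 1))) : List ℕ :=
  Multiset.sort (u.map (fun x => x.val + 1)) (· ≤ ·)

lemma decode_spec {n k : ℕ} (hn : 0 < n) (hk : 0 < k) (u : Multiset (ZMod (k * n + 1)))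
    (hcard : Multiset.card u = n) (hc : mcond k n u) :
    Pprop n k (decodeL n k u) ∧ encodeL n k (decodeL n k u) = u := by
  set cs := decodeL n k u with hcs
  have hsorted : List.Pairwise (· ≤ ·) cs := Multiset.pairwise_sort _ _
  have hlen : cs.length = n := by
    rw [hcs]
    unfold decodeL
    rw [Multiset.length_sort, Multiset.card_map, hcard]
  have h1 : ∀ c ∈ cs, 1 ≤ c := by
    intro c hc'
    rw [hcs] at hc'
    unfold decodeL at hc'
    rw [Multiset.mem_sort, Multiset.mem_map] at hc'
    obtain ⟨x, _, rfl⟩ := hc'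
    omega
  have hcoe : (cs : Multiset ℕ) = u.map (fun x => x.val + 1) := by
    rw [hcs]; unfold decodeL; exact Multiset.sort_eq _ _
  have hcount : ∀ j, cs.countP (fun c => decide (c ≤ j))
      = u.countP (fun x => x.val < j) := by
    intro j
    have := Multiset.coe_countP (fun c => c ≤ j) cs
    rw [hcoe] at this
    rw [← this, Multiset.countP_map, ← Multiset.countP_eq_card_filter]
    apply Multiset.countP_congr rfl
    intro x _
    simp only [eq_iff_iff]
    omega
  have hbounds : ∀ i < n, cs.getD i 0 ≤ 1 + i * k := by
    apply (partB n k hk cs hsorted hlen).mpr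
    intro j hj1 hj2
    rw [hcount j]
    exact hc j hj1 hj2
  have hPprop : Pprop n k cs := ⟨hlen, hsorted, h1, hbounds⟩
  refine ⟨hPprop, ?_⟩
  unfold encodeL
  rw [← Multiset.map_coe, hcoe, Multiset.map_map]
  have : ∀ x ∈ u, (((fun c => ((c - 1 : ℕ) : ZMod (k * n + 1))) ∘ (fun x : ZMod (k * n + 1) => x.val + 1)) x) = x := by
    intro x _
    simp only [Function.comp]
    rw [Nat.add_sub_cancel]
    exact ZMod.natCast_rightInverse x
  rw [Multiset.map_congr rfl this, Multiset.map_id']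

lemma encode_inj {n k : ℕ} (hk : 0 < k) {cs cs' : List ℕ} (h : Pprop n k cs)
    (h' : Pprop n k cs') (he : encodeL n k cs = encodeL n k cs') : cs = cs' := by
  unfold encodeL at he
  rw [Multiset.coe_eq_coe] at he
  have hid : ∀ (l : List ℕ), Pprop n k l →
      (l.map (fun c => ((c - 1 : ℕ) : ZMod (k * n + 1)))).map
        (fun x : ZMod (k * n + 1) => x.val + 1) = l := by
    intro l hl
    rw [List.map_map]
    have : ∀ c ∈ l, ((fun x : ZMod (k * n + 1) => x.val + 1) ∘
        (fun c => ((c - 1 : ℕ) : ZMod (k * n + 1)))) c = id c := by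
      intro c hc
      have h1 : 1 ≤ c := hl.2.2.1 c hc
      have h2 : c ≤ k * n := Pprop_le hk hl c hc
      simp only [Function.comp, id]
      rw [ZMod.val_natCast, Nat.mod_eq_of_lt (by omega)]
      omega
    rw [List.map_congr_left this, List.map_id]
  have hperm : cs.Perm cs' := by
    have hm := he.map (fun x : ZMod (k * n + 1) => x.val + 1)
    rwa [hid cs h, hid cs' h'] at hm
  exact List.Perm.eq_of_pairwise' h.2.1 h'.2.1 hperm

theorem stmt4_aux (n k : ℕ) (hn : 0 < n) (hk : 0 < k) :
    {cs : List ℕ | cs.length = n ∧ List.Pairwise (· ≤ ·) cs ∧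
        IsParkingSeq (List.replicate n k) cs 1}.ncard * (k * n + 1)
      = ((k + 1) * n).choose n := by
  classical
  have hsetP : {cs : List ℕ | cs.length = n ∧ List.Pairwise (· ≤ ·) cs ∧
      IsParkingSeq (List.replicate n k) cs 1} = {cs | Pprop n k cs} := by
    ext cs
    simp only [Set.mem_setOf_eq]
    constructor
    · rintro ⟨hlen, hsort, hips⟩
      obtain ⟨h1, h2, h3⟩ := (partA n k hk cs hsort).mp hips
      exact ⟨h1, hsort, h2, h3⟩
    · rintro ⟨hlen, hsort, h1, hb⟩
      exact ⟨hlen, hsort, (partA n k hk cs hsort).mpr ⟨hlen, h1, hb⟩⟩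
  rw [hsetP]
  have e1 : {cs : List ℕ // Pprop n k cs} ≃ {u : Sym (ZMod (k * n + 1)) n // mcond k n u.1} := by
    refine Equiv.ofBijective
      (fun p => ⟨⟨encodeL n k p.1, by
        unfold encodeL
        rw [Multiset.coe_card, List.length_map, p.2.1]⟩, encode_mcond hk p.2⟩) ⟨?_, ?_⟩
    · rintro ⟨cs, hcs⟩ ⟨cs', hcs'⟩ hfe
      have he : encodeL n k cs = encodeL n k cs' := by
        have := congrArg (fun q => q.1.1) hfe
        exact this
      exact Subtype.ext (encode_inj hk hcs hcs' he)
    · rintro ⟨⟨u, hcard⟩, hcond⟩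
      obtain ⟨hP, hE⟩ := decode_spec hn hk u hcard hcond
      exact ⟨⟨decodeL n k u, hP⟩, Subtype.ext (Subtype.ext hE)⟩
  have e2 : {u : Sym (ZMod (k * n + 1)) n // mcond k n u.1} × ZMod (k * n + 1)
      ≃ Sym (ZMod (k * n + 1)) n := by
    refine Equiv.ofBijective
      (fun p => ⟨p.1.1.1.map (fun x => x + p.2), by
        rw [Multiset.card_map]; exact p.1.1.2⟩) ⟨?_, ?_⟩
    · rintro ⟨⟨⟨s, hsc⟩, hsm⟩, t⟩ ⟨⟨⟨s', hsc'⟩, hsm'⟩, t'⟩ hfe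
      have he : s.map (fun x => x + t) = s'.map (fun x => x + t') := by
        have := congrArg (fun q => q.1) hfe
        exact this
      have hback : ∀ (w : Multiset (ZMod (k * n + 1))) (τ : ZMod (k * n + 1)),
          (w.map (fun x => x + τ)).map (fun x => x - τ) = w := by
        intro w τ
        rw [Multiset.map_map]
        have hpt : ∀ x ∈ w, ((fun x : ZMod (k * n + 1) => x - τ) ∘ (fun x => x + τ)) x = id x :=
          fun x _ => by simp
        rw [Multiset.map_congr rfl hpt, Multiset.map_id]
      obtain ⟨τ, hτ, hτu⟩ := cycle_exists_unique hn hk (s.map (fun x => x + t))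
        (by rw [Multiset.card_map]; exact hsc)
      have ht : t = τ := hτu t (by
        show mcond k n (Multiset.map (fun x => x - t) (Multiset.map (fun x => x + t) s))
        rw [hback s t]; exact hsm)
      have ht' : t' = τ := hτu t' (by
        show mcond k n (Multiset.map (fun x => x - t') (Multiset.map (fun x => x + t) s))
        rw [he, hback s' t']; exact hsm')
      have htt : t = t' := ht.trans ht'.symm
      subst htt
      have hss : s = s' := by
        have := Multiset.map_injective (f := fun x : ZMod (k * n + 1) => x + t)
          (add_left_injective t) he
        exact this
      subst hss
      rfl
    · intro u
      obtain ⟨τ, hτ, _⟩ := cycle_exists_unique hn hk u.1 u.2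
      refine ⟨⟨⟨⟨u.1.map (fun x => x - τ), by rw [Multiset.card_map]; exact u.2⟩, hτ⟩, τ⟩, ?_⟩
      apply Subtype.ext
      show (u.1.map (fun x => x - τ)).map (fun x => x + τ) = u.1
      rw [Multiset.map_map]
      have hpt : ∀ x ∈ u.1, ((fun x : ZMod (k * n + 1) => x + τ) ∘ (fun x => x - τ)) x = id x :=
        fun x _ => by simp
      rw [Multiset.map_congr rfl hpt, Multiset.map_id]
  have h1 : ({cs | Pprop n k cs} : Set (List ℕ)).ncard
      = Nat.card {u : Sym (ZMod (k * n + 1)) n // mcond k n u.1} := by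
    rw [← Nat.card_coe_set_eq]
    exact Nat.card_congr e1
  rw [h1]
  have h2 : Nat.card ({u : Sym (ZMod (k * n + 1)) n // mcond k n u.1} × ZMod (k * n + 1))
      = Nat.card (Sym (ZMod (k * n + 1)) n) := Nat.card_congr e2
  rw [Nat.card_prod, Nat.card_zmod] at h2
  rw [h2, Nat.card_eq_fintype_card, Sym.card_sym_eq_choose, ZMod.card]
  congr 1
  have : (k + 1) * n = k * n + n := by ring
  omega

theorem stmt4 (n k : ℕ) (hn : 0 < n) (hk : 0 < k) :
    {cs : List ℕ | cs.length = n ∧ List.Pairwise (· ≤ ·) cs ∧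
        IsParkingSeq (List.replicate n k) cs 1}.ncard * (k * n + 1)
      = ((k + 1) * n).choose n := by
  exact stmt4_aux n k hn hk
end
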